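/- Let (Ω,F,P) be atomless, and let A be a surplus-invariant, law-invariant, conic, and truncation-closed acceptance set of random variables. Define α := 1 - sup_{X∈A} P(X < 0) (with α = 1 if A is empty). If α < 1 and there exists X ∈ A with P(X ≤ -ε) ≥ 1-α for some ε > 0, then A = A^+_α = {X : P(X < 0) ≤ 1-α}. -/

import Mathlib

open MeasureTheory
open scoped Classical

variable {Ω : Type*} [MeasurableSpace Ω]

private lemma map_if_eq (μ : Measure Ω) [IsProbabilityMeasure μ]
    (a : ℝ) {E F : Set Ω} (hE : MeasurableSet E) (hF : MeasurableSet F)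
    (hμ : μ E = μ F) :
    μ.map (E.indicator fun _ => a) = μ.map (F.indicator fun _ => a) := by
  have hc : μ Eᶜ = μ Fᶜ := by
    rw [measure_compl hE (measure_ne_top μ E), measure_compl hF (measure_ne_top μ F), hμ]
  have mE : Measurable (E.indicator fun _ => a) :=
    (measurable_const (a := a)).indicator hE
  have mF : Measurable (F.indicator fun _ => a) :=
    (measurable_const (a := a)).indicator hF
  ext s hs
  rw [Measure.map_apply mE hs, Measure.map_apply mF hs]
  have key : ∀ G : Set Ω, (G.indicator fun _ => a) ⁻¹' s =
      (if a ∈ s then G else ∅) ∪ (if (0:ℝ) ∈ s then Gᶜ else ∅) := by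
    intro G; ext ω
    by_cases h : ω ∈ G <;> by_cases ha : a ∈ s <;> by_cases h0 : (0:ℝ) ∈ s <;>
      simp [Set.indicator_apply, h, ha, h0]
  rw [key E, key F]
  by_cases ha : a ∈ s <;> by_cases h0 : (0:ℝ) ∈ s <;>
    simp [ha, h0, hμ, hc, Set.union_compl_self]

private lemma unif_le (μ : Measure Ω) (U : Ω → ℝ) (hU : Measurable U)
    (hUd : μ.map U = volume.restrict (Set.Icc (0 : ℝ) 1))
    {r : ℝ} (h0 : 0 ≤ r) (h1 : r ≤ 1) :
    μ (U ⁻¹' Set.Iic r) = ENNReal.ofReal r := by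
  rw [← Measure.map_apply hU measurableSet_Iic, hUd,
    Measure.restrict_apply measurableSet_Iic]
  have heq : Set.Iic r ∩ Set.Icc (0:ℝ) 1 = Set.Icc 0 r := by
    ext x; simp only [Set.mem_inter_iff, Set.mem_Iic, Set.mem_Icc]
    constructor
    · rintro ⟨hx, hx0, _⟩; exact ⟨hx0, hx⟩
    · rintro ⟨hx0, hx⟩; exact ⟨hx, hx0, hx.trans h1⟩
  rw [heq, Real.volume_Icc, sub_zero]

/-- If `A` is a surplus-invariant, law-invariant, conic, and truncation-closed acceptance
set on an atomless probability space (one supporting a uniform random variable `U`),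
`α := 1 - sup_{X ∈ A} P(X < 0)` satisfies `α < 1`, and some `X ∈ A` has
`P(X ≤ -ε) ≥ 1 - α` for some `ε > 0`, then `A = A⁺_α = {X : P(X < 0) ≤ 1 - α}`. -/
theorem stmt_16 (μ : Measure Ω) [IsProbabilityMeasure μ]
    (U : Ω → ℝ) (hU : Measurable U)
    (hUd : μ.map U = volume.restrict (Set.Icc (0 : ℝ) 1))
    (𝒳 A : Set (Ω → ℝ))
    (h𝒳m : ∀ X ∈ 𝒳, Measurable X)
    (h𝒳b : ∀ X : Ω → ℝ, Measurable X → (∃ C : ℝ, ∀ ω, |X ω| ≤ C) → X ∈ 𝒳)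
    (hA𝒳 : A ⊆ 𝒳)
    (hSI : ∀ X ∈ A, ∀ Y ∈ 𝒳,
      (∀ᵐ ω ∂μ, max (-(Y ω)) 0 ≤ max (-(X ω)) 0) → Y ∈ A)
    (hLI : ∀ X ∈ A, ∀ Y ∈ 𝒳, μ.map Y = μ.map X → Y ∈ A)
    (hCon : ∀ X ∈ A, ∀ c : ℝ, 0 < c →
      (fun ω => c * X ω) ∈ 𝒳 → (fun ω => c * X ω) ∈ A)
    (hTC : ∀ X ∈ 𝒳,
      (∀ d : ℝ, 0 < d → (fun ω => min (max (-d) (X ω)) d) ∈ A) → X ∈ A)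
    (α : ℝ)
    (hαdef : α = 1 - sSup ((fun X : Ω → ℝ => (μ {ω | X ω < 0}).toReal) '' A))
    (hα1 : α < 1)
    (hbad : ∃ X ∈ A, ∃ ε : ℝ, 0 < ε ∧ 1 - α ≤ (μ {ω | X ω ≤ -ε}).toReal) :
    A = {X | X ∈ 𝒳 ∧ (μ {ω | X ω < 0}).toReal ≤ 1 - α} := by
  have hbdd : BddAbove ((fun X : Ω → ℝ => (μ {ω | X ω < 0}).toReal) '' A) := by
    refine ⟨1, ?_⟩
    rintro y ⟨X, -, rfl⟩
    exact ENNReal.toReal_le_of_le_ofReal zero_le_one (by simpa using prob_le_one (μ := μ))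
  have hβ : sSup ((fun X : Ω → ℝ => (μ {ω | X ω < 0}).toReal) '' A) = 1 - α := by
    rw [hαdef]; ring
  obtain ⟨X₀, hX₀A, ε, hε, hbadp⟩ := hbad
  have hε' : ε ≠ 0 := ne_of_gt hε
  set p : ℝ := (μ {ω | X₀ ω ≤ -ε}).toReal with hpdef
  have hp0 : 0 ≤ p := ENNReal.toReal_nonneg
  have hp1 : p ≤ 1 :=
    ENNReal.toReal_le_of_le_ofReal zero_le_one (by simpa using prob_le_one (μ := μ))
  have hX₀m : Measurable X₀ := h𝒳m X₀ (hA𝒳 hX₀A)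
  -- Step 1: Z = -ε · 1_{X₀ ≤ -ε} ∈ A by surplus invariance
  set E₀ : Set Ω := {ω | X₀ ω ≤ -ε} with hE₀def
  have hE₀m : MeasurableSet E₀ := measurableSet_le hX₀m measurable_const
  set Z : Ω → ℝ := E₀.indicator fun _ => -ε with hZdef
  have hZm : Measurable Z := (measurable_const (a := -ε)).indicator hE₀m
  have hZ𝒳 : Z ∈ 𝒳 := by
    refine h𝒳b Z hZm ⟨ε, fun ω => ?_⟩
    by_cases h : ω ∈ E₀ <;> simp [hZdef, Set.indicator_apply, h, abs_neg, abs_of_pos hε, hε.le]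
  have hZA : Z ∈ A := by
    refine hSI X₀ hX₀A Z hZ𝒳 (Filter.Eventually.of_forall fun ω => ?_)
    by_cases h : ω ∈ E₀
    · have hω : X₀ ω ≤ -ε := h
      simp only [hZdef, Set.indicator_of_mem h]
      exact max_le (le_max_of_le_left (by linarith)) (le_max_right _ _)
    · simp [hZdef, Set.indicator_of_notMem h, le_max_right]
  -- Step 2: Z' = -ε · 1_{U ≤ p} ∈ A by law invariance
  set Ep : Set Ω := U ⁻¹' Set.Iic p with hEpdef
  have hEpm : MeasurableSet Ep := hU measurableSet_Iic
  have hμEp : μ Ep = ENNReal.ofReal p := unif_le μ U hU hUd hp0 hp1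
  set Z' : Ω → ℝ := Ep.indicator fun _ => -ε with hZ'def
  have hZ'm : Measurable Z' := (measurable_const (a := -ε)).indicator hEpm
  have hZ'𝒳 : Z' ∈ 𝒳 := by
    refine h𝒳b Z' hZ'm ⟨ε, fun ω => ?_⟩
    by_cases h : ω ∈ Ep <;> simp [hZ'def, Set.indicator_apply, h, abs_neg, abs_of_pos hε, hε.le]
  have hZ'A : Z' ∈ A := by
    refine hLI Z hZA Z' hZ'𝒳 ?_
    refine map_if_eq μ (-ε) hEpm hE₀m ?_
    rw [hμEp, hpdef, ENNReal.ofReal_toReal (measure_ne_top μ _)]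
  -- Now the set equality
  ext X
  constructor
  · intro hX
    refine ⟨hA𝒳 hX, ?_⟩
    rw [← hβ]
    exact le_csSup hbdd ⟨X, hX, rfl⟩
  · rintro ⟨hX𝒳, hXq⟩
    have hXm : Measurable X := h𝒳m X hX𝒳
    have hqp : (μ {ω | X ω < 0}).toReal ≤ p := le_trans hXq hbadp
    -- find t with μ ({X < 0} ∪ {U ≤ t}) = ofReal p via IVT
    set g : ℝ → ℝ := fun t => (μ ({ω | X ω < 0} ∪ U ⁻¹' Set.Iic t)).toReal with hgdef
    have hmono : ∀ s t : ℝ, s ≤ t → g s ≤ g t := by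
      intro s t hst
      exact ENNReal.toReal_mono (measure_ne_top μ _)
        (measure_mono (Set.union_subset_union_right _
          (Set.preimage_mono (Set.Iic_subset_Iic.mpr hst))))
    have hstep : ∀ s t : ℝ, s ≤ t → g t ≤ g s + (t - s) := by
      intro s t hst
      have hsub : {ω | X ω < 0} ∪ U ⁻¹' Set.Iic t ⊆
          ({ω | X ω < 0} ∪ U ⁻¹' Set.Iic s) ∪ U ⁻¹' Set.Ioc s t := by
        rintro ω (h | h)
        · exact Or.inl (Or.inl h)
        · by_cases h2 : U ω ≤ s
          · exact Or.inl (Or.inr h2)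
          · exact Or.inr ⟨lt_of_not_ge h2, h⟩
      have hIoc : μ (U ⁻¹' Set.Ioc s t) ≤ ENNReal.ofReal (t - s) := by
        rw [← Measure.map_apply hU measurableSet_Ioc, hUd,
          Measure.restrict_apply measurableSet_Ioc]
        exact le_trans (measure_mono Set.inter_subset_left) (le_of_eq Real.volume_Ioc)
      have hle : μ ({ω | X ω < 0} ∪ U ⁻¹' Set.Iic t) ≤
          μ ({ω | X ω < 0} ∪ U ⁻¹' Set.Iic s) + ENNReal.ofReal (t - s) :=
        le_trans (le_trans (measure_mono hsub) (measure_union_le _ _))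
          (add_le_add le_rfl hIoc)
      calc g t ≤ (μ ({ω | X ω < 0} ∪ U ⁻¹' Set.Iic s) + ENNReal.ofReal (t - s)).toReal :=
            ENNReal.toReal_mono
              (ENNReal.add_ne_top.mpr ⟨measure_ne_top μ _, ENNReal.ofReal_ne_top⟩) hle
        _ = g s + (t - s) := by
            rw [ENNReal.toReal_add (measure_ne_top μ _) ENNReal.ofReal_ne_top,
              ENNReal.toReal_ofReal (by linarith)]
    have hlip : LipschitzWith 1 g := by
      refine LipschitzWith.of_dist_le_mul fun s t => ?_
      rw [NNReal.coe_one, one_mul, Real.dist_eq, Real.dist_eq]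
      rcases le_total s t with h | h
      · have h1 := hmono s t h; have h2 := hstep s t h
        rw [abs_of_nonpos (by linarith), abs_of_nonpos (by linarith)]; linarith
      · have h1 := hmono t s h; have h2 := hstep t s h
        rw [abs_of_nonneg (by linarith), abs_of_nonneg (by linarith)]; linarith
    have hg0 : g 0 ≤ p := by
      have h0 : μ (U ⁻¹' Set.Iic (0:ℝ)) = 0 := by
        have := unif_le μ U hU hUd le_rfl zero_le_one; simpa using this
      have hle : μ ({ω | X ω < 0} ∪ U ⁻¹' Set.Iic (0:ℝ)) ≤ μ {ω | X ω < 0} := by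
        refine le_trans (measure_union_le _ _) ?_
        rw [h0, add_zero]
      exact le_trans (ENNReal.toReal_mono (measure_ne_top μ _) hle) hqp
    have hg1 : p ≤ g 1 := by
      have h1 : μ (U ⁻¹' Set.Iic (1:ℝ)) = 1 := by
        have := unif_le μ U hU hUd zero_le_one le_rfl
        simpa [ENNReal.ofReal_one] using this
      have h2 : (1:ℝ) ≤ g 1 := by
        have hm : μ (U ⁻¹' Set.Iic (1:ℝ)) ≤ μ ({ω | X ω < 0} ∪ U ⁻¹' Set.Iic 1) :=
          measure_mono Set.subset_union_right
        calc (1:ℝ) = (μ (U ⁻¹' Set.Iic (1:ℝ))).toReal := by rw [h1]; simp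
          _ ≤ g 1 := ENNReal.toReal_mono (measure_ne_top μ _) hm
      linarith
    obtain ⟨t, -, hgt⟩ :=
      intermediate_value_Icc zero_le_one hlip.continuous.continuousOn ⟨hg0, hg1⟩
    set E : Set Ω := {ω | X ω < 0} ∪ U ⁻¹' Set.Iic t with hEdef
    have hEm : MeasurableSet E :=
      (measurableSet_lt hXm measurable_const).union (hU measurableSet_Iic)
    have hμE : μ E = ENNReal.ofReal p := by
      rw [← hgt]; exact (ENNReal.ofReal_toReal (measure_ne_top μ _)).symm
    -- conclude via truncation-closedness
    refine hTC X hX𝒳 fun d hd => ?_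
    -- Wd = -d · 1_{U ≤ p} ∈ A by conicity
    set Wd : Ω → ℝ := Ep.indicator fun _ => -d with hWddef
    have hWdm : Measurable Wd := (measurable_const (a := -d)).indicator hEpm
    have hWd𝒳 : Wd ∈ 𝒳 := by
      refine h𝒳b Wd hWdm ⟨d, fun ω => ?_⟩
      by_cases h : ω ∈ Ep <;> simp [hWddef, Set.indicator_apply, h, abs_neg, abs_of_pos hd, hd.le]
    have heq : (fun ω => (d / ε) * Z' ω) = Wd := by
      funext ω
      by_cases h : ω ∈ Ep
      · simp only [hZ'def, hWddef, Set.indicator_of_mem h]; field_simp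
      · simp [hZ'def, hWddef, Set.indicator_of_notMem h]
    have hWdA : Wd ∈ A := by
      have := hCon Z' hZ'A (d / ε) (div_pos hd hε) (by rw [heq]; exact hWd𝒳)
      rwa [heq] at this
    -- W = -d · 1_E ∈ A by law invariance
    set W : Ω → ℝ := E.indicator fun _ => -d with hWdef
    have hWm : Measurable W := (measurable_const (a := -d)).indicator hEm
    have hW𝒳 : W ∈ 𝒳 := by
      refine h𝒳b W hWm ⟨d, fun ω => ?_⟩
      by_cases h : ω ∈ E <;> simp [hWdef, Set.indicator_apply, h, abs_neg, abs_of_pos hd, hd.le]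
    have hWA : W ∈ A := by
      refine hLI Wd hWdA W hW𝒳 ?_
      rw [hWdef, hWddef]
      exact map_if_eq μ (-d) hEm hEpm (by rw [hμE, hμEp])
    -- truncation of X dominated by W on the downside
    set Xd : Ω → ℝ := fun ω => min (max (-d) (X ω)) d with hXddef
    have hXdm : Measurable Xd := (measurable_const.max hXm).min measurable_const
    have hXd𝒳 : Xd ∈ 𝒳 := by
      refine h𝒳b Xd hXdm ⟨d, fun ω => ?_⟩
      rw [abs_le]
      exact ⟨le_min (le_max_left _ _) (by linarith), min_le_right _ _⟩
    refine hSI W hWA Xd hXd𝒳 (Filter.Eventually.of_forall fun ω => ?_)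
    by_cases h : ω ∈ E
    · have hlb : -d ≤ Xd ω := le_min (le_max_left _ _) (by linarith)
      simp only [hWdef, Set.indicator_of_mem h, neg_neg]
      exact max_le (le_max_of_le_left (by linarith)) (le_max_of_le_left hd.le)
    · have hX0 : 0 ≤ X ω := by
        by_contra hc
        exact h (Or.inl (lt_of_not_ge hc))
      have hXd0 : 0 ≤ Xd ω := le_min (le_max_of_le_right hX0) hd.le
      have hneg : -Xd ω ≤ 0 := neg_nonpos_of_nonneg hXd0
      simp only [hWdef, Set.indicator_of_notMem h, neg_zero]
      exact max_le (le_max_of_le_right hneg) (le_max_right _ _)
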